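/- arXiv:2603.15856 — 2 statements merged into one kernel-verified Lean document; each statement's English description precedes it below -/
import Mathlib

section
/- Let p ≥ 3 be a prime and let μ be a probability distribution on F_p supported on more than one value. For any r ≥ 1, ℓ ≥ 1 and ε > 0, there exists D ∈ ℕ such that the following holds for all n ≥ 1. Let M ∈ F_p^{n×n} be a matrix and let I_1,…,I_D ⊆ {1,…,n} be pairwise disjoint sets of size r such that for each i = 1,…,D, the r×r submatrix M[I_i × I_i] (rows and columns both indexed by I_i) has rank r. Let x ∈ F_p^n be a random vector with independent μ-distributed entries. Then the probability that the vector Mx has at most ℓ nonzero entries is at most 2·p^{-r} + ε. -/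
open scoped Classical
open Finset Submodule Matrix

noncomputable def Complex.abs : AbsoluteValue ℂ ℝ where
  toFun := norm
  map_mul' := norm_mul
  nonneg' := norm_nonneg
  eq_zero' _ := norm_eq_zero
  add_le' := norm_add_le

lemma Complex.abs_ofReal (x : ℝ) : Complex.abs (x : ℂ) = |x| := by
  show ‖(x : ℂ)‖ = |x|; simp

lemma Complex.re_le_abs (z : ℂ) : z.re ≤ Complex.abs z := Complex.re_le_norm z

lemma Complex.sq_abs (z : ℂ) : Complex.abs z ^ 2 = Complex.normSq z := Complex.sq_norm z

lemma Complex.abs_conj (z : ℂ) : Complex.abs ((starRingEnd ℂ) z) = Complex.abs z :=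
  Complex.norm_conj z

lemma Circle.abs_coe (z : Circle) : Complex.abs (z : ℂ) = 1 := Circle.norm_coe z

lemma Complex.abs_natCast (k : ℕ) : Complex.abs (k : ℂ) = k := by
  show ‖(k : ℂ)‖ = k; simp

namespace RHR

variable {p : ℕ} [Fact p.Prime]


variable {p : ℕ} [Fact p.Prime]

noncomputable def phi (μ : ZMod p → ℝ) (t : ZMod p) : ℂ :=
  ∑ z : ZMod p, (μ z : ℂ) * ZMod.stdAddChar (t * z)

lemma abs_stdAddChar (j : ZMod p) : Complex.abs (ZMod.stdAddChar j) = 1 := by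
  rw [ZMod.stdAddChar_apply]; exact Circle.abs_coe _

lemma phi_zero (μ : ZMod p → ℝ) (hμ1 : ∑ z, μ z = 1) : phi μ 0 = 1 := by
  have : ∀ z : ZMod p, (μ z : ℂ) * ZMod.stdAddChar ((0 : ZMod p) * z) = (μ z : ℂ) := by
    intro z
    rw [zero_mul, AddChar.map_zero_eq_one, mul_one]
  rw [phi]
  rw [Finset.sum_congr rfl fun z _ => this z, ← Complex.ofReal_sum, hμ1, Complex.ofReal_one]

lemma abs_phi_le_one (μ : ZMod p → ℝ) (hμ0 : ∀ z, 0 ≤ μ z) (hμ1 : ∑ z, μ z = 1) (t : ZMod p) :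
    Complex.abs (phi μ t) ≤ 1 := by
  calc Complex.abs (phi μ t) ≤ ∑ z : ZMod p, Complex.abs ((μ z : ℂ) * ZMod.stdAddChar (t * z)) :=
        Complex.abs.sum_le _ _
    _ = ∑ z : ZMod p, μ z := by
        refine Finset.sum_congr rfl fun z _ => ?_
        rw [_root_.map_mul, abs_stdAddChar, mul_one, Complex.abs_ofReal, abs_of_nonneg (hμ0 z)]
    _ = 1 := hμ1

lemma abs_phi_lt_one (μ : ZMod p → ℝ) (hμ0 : ∀ z, 0 ≤ μ z) (hμ1 : ∑ z, μ z = 1)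
    {a b : ZMod p} (hab : a ≠ b) (ha : μ a ≠ 0) (hb : μ b ≠ 0)
    {t : ZMod p} (ht : t ≠ 0) : Complex.abs (phi μ t) < 1 := by
  set u : ZMod p → ℂ := fun z => ZMod.stdAddChar (t * z) with hu
  have habs : ∀ z, Complex.abs (u z) = 1 := fun z => abs_stdAddChar _
  have huab : u a ≠ u b := by
    intro h
    have := ZMod.injective_stdAddChar h
    exact hab (mul_left_cancel₀ ht this)
  -- decompose the sum
  have hbmem : b ∈ (univ : Finset (ZMod p)).erase a := by
    simp [Ne.symm, hab.symm]
  set s : Finset (ZMod p) := ((univ : Finset (ZMod p)).erase a).erase b with hs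
  have hsplit : ∀ f : ZMod p → ℂ, ∑ z : ZMod p, f z = f a + (f b + ∑ z ∈ s, f z) := by
    intro f
    rw [← Finset.add_sum_erase _ f (mem_univ a), ← Finset.add_sum_erase _ f hbmem]
  have hsplitR : ∀ f : ZMod p → ℝ, ∑ z : ZMod p, f z = f a + (f b + ∑ z ∈ s, f z) := by
    intro f
    rw [← Finset.add_sum_erase _ f (mem_univ a), ← Finset.add_sum_erase _ f hbmem]
  have hA : 0 < μ a := lt_of_le_of_ne (hμ0 a) (Ne.symm ha)
  have hB : 0 < μ b := lt_of_le_of_ne (hμ0 b) (Ne.symm hb)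
  -- the two-atom strict bound
  have key : Complex.abs ((μ a : ℂ) * u a + (μ b : ℂ) * u b) < μ a + μ b := by
    have hre : (u a * (starRingEnd ℂ) (u b)).re < 1 := by
      have h1 : Complex.abs (u a * (starRingEnd ℂ) (u b)) = 1 := by
        rw [_root_.map_mul, Complex.abs_conj, habs, habs, mul_one]
      have hle : (u a * (starRingEnd ℂ) (u b)).re ≤ 1 := by
        calc (u a * (starRingEnd ℂ) (u b)).re ≤ Complex.abs (u a * (starRingEnd ℂ) (u b)) :=
              Complex.re_le_abs _
          _ = 1 := h1
      rcases lt_or_eq_of_le hle with h | h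
      · exact h
      · exfalso
        have him : (u a * (starRingEnd ℂ) (u b)).im = 0 := by
          have := Complex.sq_abs (u a * (starRingEnd ℂ) (u b))
          rw [h1] at this
          rw [Complex.normSq_apply] at this
          nlinarith [sq_nonneg ((u a * (starRingEnd ℂ) (u b)).im)]
        have heq1 : u a * (starRingEnd ℂ) (u b) = 1 := by
          apply Complex.ext <;> simp [h, him]
        have hubne : u b ≠ 0 := by
          intro h0
          have := habs b
          rw [h0] at this
          simp at this
        have : u a = u b := by
          have h2 : (starRingEnd ℂ) (u b) * u b = 1 := by
            have := Complex.mul_conj (u b)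
            have habs2 : Complex.normSq (u b) = 1 := by
              have := Complex.sq_abs (u b)
              rw [habs b] at this
              simpa using this.symm
            rw [mul_comm]
            rw [this, habs2, Complex.ofReal_one]
          calc u a = u a * ((starRingEnd ℂ) (u b) * u b) := by rw [h2, mul_one]
            _ = (u a * (starRingEnd ℂ) (u b)) * u b := by ring
            _ = u b := by rw [heq1, one_mul]
        exact huab this
    have hsq : Complex.abs ((μ a : ℂ) * u a + (μ b : ℂ) * u b) ^ 2
        = μ a ^ 2 + μ b ^ 2 + 2 * μ a * μ b * (u a * (starRingEnd ℂ) (u b)).re := by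
      rw [Complex.sq_abs, Complex.normSq_add]
      rw [Complex.normSq_mul, Complex.normSq_mul]
      rw [Complex.normSq_ofReal, Complex.normSq_ofReal]
      have habs1 : Complex.normSq (u a) = 1 := by
        have := Complex.sq_abs (u a); rw [habs a] at this; simpa using this.symm
      have habs2 : Complex.normSq (u b) = 1 := by
        have := Complex.sq_abs (u b); rw [habs b] at this; simpa using this.symm
      rw [habs1, habs2]
      have hconj : (starRingEnd ℂ) ((μ b : ℂ) * u b) = (μ b : ℂ) * (starRingEnd ℂ) (u b) := by
        rw [_root_.map_mul, Complex.conj_ofReal]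
      rw [hconj]
      have : ((μ a : ℂ) * u a * ((μ b : ℂ) * (starRingEnd ℂ) (u b))).re
          = μ a * μ b * (u a * (starRingEnd ℂ) (u b)).re := by
        have : (μ a : ℂ) * u a * ((μ b : ℂ) * (starRingEnd ℂ) (u b))
            = ((μ a * μ b : ℝ) : ℂ) * (u a * (starRingEnd ℂ) (u b)) := by
          push_cast; ring
        rw [this, Complex.re_ofReal_mul]
      rw [this]; ring
    have h2 : Complex.abs ((μ a : ℂ) * u a + (μ b : ℂ) * u b) ^ 2 < (μ a + μ b) ^ 2 := by
      rw [hsq]; nlinarith [mul_pos hA hB, hre]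
    exact lt_of_pow_lt_pow_left₀ 2 (by positivity) h2
  -- assemble
  have htail : Complex.abs (∑ z ∈ s, (μ z : ℂ) * u z) ≤ ∑ z ∈ s, μ z := by
    calc Complex.abs (∑ z ∈ s, (μ z : ℂ) * u z) ≤ ∑ z ∈ s, Complex.abs ((μ z : ℂ) * u z) :=
          Complex.abs.sum_le _ _
      _ = ∑ z ∈ s, μ z := by
          refine Finset.sum_congr rfl fun z _ => ?_
          rw [_root_.map_mul, habs, mul_one, Complex.abs_ofReal, abs_of_nonneg (hμ0 z)]
  have hsum : μ a + (μ b + ∑ z ∈ s, μ z) = 1 := by rw [← hsplitR μ]; exact hμ1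
  have : Complex.abs (phi μ t)
      ≤ Complex.abs ((μ a : ℂ) * u a + (μ b : ℂ) * u b) + ∑ z ∈ s, μ z := by
    rw [phi]
    have : ∑ z : ZMod p, (μ z : ℂ) * ZMod.stdAddChar (t * z)
        = ((μ a : ℂ) * u a + (μ b : ℂ) * u b) + ∑ z ∈ s, (μ z : ℂ) * u z := by
      rw [hsplit (fun z => (μ z : ℂ) * u z)]; ring
    rw [this]
    calc Complex.abs _ ≤ Complex.abs ((μ a : ℂ) * u a + (μ b : ℂ) * u b)
          + Complex.abs (∑ z ∈ s, (μ z : ℂ) * u z) := Complex.abs.add_le _ _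
      _ ≤ _ := by linarith [htail]
  calc Complex.abs (phi μ t) ≤ Complex.abs ((μ a : ℂ) * u a + (μ b : ℂ) * u b)
        + ∑ z ∈ s, μ z := this
    _ < (μ a + μ b) + ∑ z ∈ s, μ z := by linarith
    _ = 1 := by linarith [hsum]



variable {p : ℕ} [Fact p.Prime]


lemma psi_sum {ι : Type*} (s : Finset ι) (f : ι → ZMod p) :
    ZMod.stdAddChar (∑ i ∈ s, f i) = ∏ i ∈ s, ZMod.stdAddChar (f i) := by
  induction s using Finset.cons_induction with
  | empty => simp
  | cons a s ha ih => rw [Finset.sum_cons, Finset.prod_cons, AddChar.map_add_eq_mul, ih]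

lemma pl_bound (μ : ZMod p → ℝ) (hμ0 : ∀ z, 0 ≤ μ z) {n d : ℕ}
    (v : Fin d → Fin n → ZMod p) :
    (∑ x ∈ univ.filter (fun x : Fin n → ZMod p => ∀ j, ∑ c, v j c * x c = 0), ∏ i, μ (x i))
      ≤ ((p : ℝ)⁻¹) ^ d *
        ∑ l : Fin d → ZMod p, ∏ c, Complex.abs (phi μ (∑ j, l j * v j c)) := by
  haveI : NeZero p := ⟨(Fact.out : p.Prime).ne_zero⟩
  have hpC : (p : ℂ) ≠ 0 := by
    exact_mod_cast (Nat.cast_ne_zero (R := ℂ)).mpr (Fact.out : p.Prime).ne_zero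
  set T : ℝ :=
    ∑ x ∈ univ.filter (fun x : Fin n → ZMod p => ∀ j, ∑ c, v j c * x c = 0), ∏ i, μ (x i)
    with hT
  have hT0 : 0 ≤ T := Finset.sum_nonneg fun x _ => Finset.prod_nonneg fun i _ => hμ0 _
  -- orthogonality step
  have horth : ∀ cv : Fin d → ZMod p, (if (∀ j, cv j = 0) then (1 : ℂ) else 0)
      = (p : ℂ)⁻¹ ^ d * ∑ l : Fin d → ZMod p, ∏ j, ZMod.stdAddChar (l j * cv j) := by
    intro cv
    have h1 : ∏ j : Fin d, ∑ t : ZMod p, ZMod.stdAddChar (t * cv j)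
        = ∑ l : Fin d → ZMod p, ∏ j, ZMod.stdAddChar (l j * cv j) := Fintype.prod_sum _
    have h2 : ∀ j : Fin d, ∑ t : ZMod p, ZMod.stdAddChar (t * cv j)
        = if cv j = 0 then (p : ℂ) else 0 := by
      intro j
      rw [AddChar.sum_mulShift _ (ZMod.isPrimitive_stdAddChar p)]
      simp [ZMod.card]
    rw [← h1, Finset.prod_congr rfl (fun j _ => h2 j)]
    have h3 : ∀ j : Fin d, (if cv j = 0 then (p : ℂ) else 0)
        = (p : ℂ) * (if cv j = 0 then 1 else 0) := by
      intro j; split_ifs <;> simp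
    rw [Finset.prod_congr rfl (fun j _ => h3 j), Finset.prod_mul_distrib,
      Finset.prod_const, Finset.prod_boole]
    rw [← mul_assoc, Finset.card_univ, Fintype.card_fin]
    rw [inv_pow, inv_mul_cancel₀ (pow_ne_zero _ hpC), one_mul]
    simp
  -- the complex identity
  have hTC : (T : ℂ) = (p : ℂ)⁻¹ ^ d *
      ∑ l : Fin d → ZMod p, ∏ c, phi μ (∑ j, l j * v j c) := by
    have e1 : (T : ℂ) = ∑ x : Fin n → ZMod p,
        (∏ i, (μ (x i) : ℂ)) * (if (∀ j, ∑ c, v j c * x c = 0) then (1 : ℂ) else 0) := by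
      rw [hT]
      push_cast
      rw [Finset.sum_filter]
      refine Finset.sum_congr rfl fun x _ => ?_
      split_ifs <;> simp
    rw [e1]
    have e2 : ∀ x : Fin n → ZMod p,
        (∏ i, (μ (x i) : ℂ)) * (if (∀ j, ∑ c, v j c * x c = 0) then (1 : ℂ) else 0)
        = (p : ℂ)⁻¹ ^ d * ∑ l : Fin d → ZMod p,
            ∏ c, ((μ (x c) : ℂ) * ZMod.stdAddChar ((∑ j, l j * v j c) * x c)) := by
      intro x
      rw [horth (fun j => ∑ c, v j c * x c)]
      rw [mul_left_comm]
      congr 1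
      rw [Finset.mul_sum]
      refine Finset.sum_congr rfl fun l _ => ?_
      have hψ : ∏ j, ZMod.stdAddChar (l j * ∑ c, v j c * x c)
          = ∏ c, ZMod.stdAddChar ((∑ j, l j * v j c) * x c) := by
        rw [← psi_sum, ← psi_sum]
        congr 1
        calc ∑ j, l j * ∑ c, v j c * x c = ∑ j, ∑ c, l j * v j c * x c := by
              simp_rw [Finset.mul_sum, mul_assoc]
          _ = ∑ c, ∑ j, l j * v j c * x c := Finset.sum_comm
          _ = ∑ c, (∑ j, l j * v j c) * x c := by simp_rw [Finset.sum_mul]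
      rw [hψ, Finset.prod_mul_distrib]
    rw [Finset.sum_congr rfl (fun x _ => e2 x), ← Finset.mul_sum]
    congr 1
    rw [Finset.sum_comm]
    refine Finset.sum_congr rfl fun l _ => ?_
    have : ∀ c : Fin n, phi μ (∑ j, l j * v j c)
        = ∑ z : ZMod p, (μ z : ℂ) * ZMod.stdAddChar ((∑ j, l j * v j c) * z) := fun c => rfl
    rw [Finset.prod_congr rfl fun c _ => this c]
    rw [Fintype.prod_sum fun c z => (μ z : ℂ) * ZMod.stdAddChar ((∑ j, l j * v j c) * z)]
  -- take absolute values
  have habs : T ≤ Complex.abs ((T : ℂ)) := by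
    rw [Complex.abs_ofReal, abs_of_nonneg hT0]
  calc T ≤ Complex.abs ((T : ℂ)) := habs
    _ = Complex.abs ((p : ℂ)⁻¹ ^ d) *
        Complex.abs (∑ l : Fin d → ZMod p, ∏ c, phi μ (∑ j, l j * v j c)) := by
        rw [hTC, _root_.map_mul]
    _ ≤ ((p : ℝ)⁻¹) ^ d * ∑ l : Fin d → ZMod p, ∏ c, Complex.abs (phi μ (∑ j, l j * v j c)) := by
        refine mul_le_mul ?_ ?_ (Complex.abs.nonneg _) (by positivity)
        · rw [_root_.map_pow, map_inv₀, Complex.abs_natCast]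
        · refine le_trans (Complex.abs.sum_le _ _) ?_
          refine le_of_eq (Finset.sum_congr rfl fun l _ => ?_)
          exact _root_.map_prod Complex.abs _ _



variable {p : ℕ} [Fact p.Prime]

/-- choice of coordinates on which an independent family is "invertible" -/
lemma exists_coords {n d : ℕ} (v : Fin d → Fin n → ZMod p)
    (hv : LinearIndependent (ZMod p) v) :
    ∃ g : Fin d → Fin n, Function.Injective g ∧
      Function.Bijective (fun l : Fin d → ZMod p => fun j' : Fin d => ∑ j, l j * v j (g j')) := by
  set U : Matrix (Fin d) (Fin n) (ZMod p) := Matrix.of v with hU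
  have hrows : LinearIndependent (ZMod p) (fun i => U i) := hv
  have hvecMul : Function.Injective U.vecMul := Matrix.vecMul_injective_iff.mpr hrows
  have hmulVecT : Function.Injective (Uᵀ.mulVec) := by
    intro x y h
    apply hvecMul
    show x ᵥ* U = y ᵥ* U
    rwa [← Matrix.mulVec_transpose, ← Matrix.mulVec_transpose]
  have hrankT : Uᵀ.rank = d := by
    have h2 : Function.Injective Uᵀ.mulVecLin := hmulVecT
    rw [Matrix.rank, LinearMap.finrank_range_of_inj h2]
    simp
  have hrank : U.rank = d := by rw [← Matrix.rank_transpose]; exact hrankT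
  have hrange : LinearMap.range U.mulVecLin = ⊤ := by
    apply Submodule.eq_top_of_finrank_eq
    rw [← Matrix.rank, hrank]
    simp
  have hspan : span (ZMod p) (Set.range Uᵀ) = ⊤ := by
    have hcol : Set.range Uᵀ = Set.range U.col := rfl
    rw [hcol, ← Matrix.range_mulVecLin]; exact hrange
  obtain ⟨b, hbsub, hbspan, hbind⟩ := exists_linearIndependent (ZMod p) (Set.range Uᵀ)
  rw [hspan] at hbspan
  haveI : Fintype b := Fintype.ofFinite _
  have hbcard : b.toFinset.card = d := by
    have h1 : Module.finrank (ZMod p) (span (ZMod p) b) = b.toFinset.card :=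
      finrank_span_set_eq_card hbind
    rw [hbspan, finrank_top] at h1
    simpa using h1.symm
  have hcard : Fintype.card b = d := by rwa [Set.toFinset_card] at hbcard
  set e : Fin d ≃ b := (Fintype.equivFinOfCardEq hcard).symm with he
  have hchoice : ∀ j' : Fin d, ∃ c : Fin n, Uᵀ c = (e j' : Fin d → ZMod p) :=
    fun j' => hbsub (e j').2
  choose g hg using hchoice
  have hginj : Function.Injective g := by
    intro j1 j2 h
    have h2 : (e j1 : Fin d → ZMod p) = (e j2 : Fin d → ZMod p) := by rw [← hg j1, ← hg j2, h]
    have h3 := Subtype.ext h2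
    simpa using e.injective h3
  set L : (Fin d → ZMod p) →ₗ[ZMod p] (Fin d → ZMod p) :=
    { toFun := fun l => fun j' => ∑ j, l j * v j (g j'),
      map_add' := by
        intro a b; funext j'; simp [add_mul, Finset.sum_add_distrib]
      map_smul' := by
        intro m a; funext j'; simp [Finset.mul_sum, mul_assoc] } with hL
  have hLinj : Function.Injective L := by
    rw [← LinearMap.ker_eq_bot, Submodule.eq_bot_iff]
    intro l hl
    rw [LinearMap.mem_ker] at hl
    set K : (Fin d → ZMod p) →ₗ[ZMod p] ZMod p :=
      { toFun := fun u => ∑ j, l j * u j,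
        map_add' := by intro a b; simp [mul_add, Finset.sum_add_distrib]
        map_smul' := by intro m a; simp [Finset.mul_sum, mul_left_comm] } with hK
    have hKb : ∀ u ∈ b, K u = 0 := by
      intro u hu
      set j' := e.symm ⟨u, hu⟩ with hj'
      have h4 : (e j' : Fin d → ZMod p) = u := by rw [hj']; simp
      have hKu : K u = ∑ j, l j * v j (g j') := by
        rw [← h4, ← hg j']
        rfl
      rw [hKu]
      have h5 := congrFun hl j'
      exact h5
    have hker : span (ZMod p) b ≤ LinearMap.ker K := span_le.mpr fun u hu => hKb u hu
    rw [hbspan, top_le_iff] at hker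
    funext j
    have h6 : K (Pi.single j 1) = 0 := by
      rw [← LinearMap.mem_ker, hker]; trivial
    rw [hK] at h6
    simpa [Pi.single_apply, mul_ite, Finset.sum_ite_eq'] using h6
  have hLsurj : Function.Surjective L := (LinearMap.injective_iff_surjective).mp hLinj
  exact ⟨g, hginj, hLinj, hLsurj⟩


lemma pl_robust (μ : ZMod p → ℝ) (hμ0 : ∀ z, 0 ≤ μ z) (hμ1 : ∑ z, μ z = 1)
    (θ : ℝ) (hθ0 : 0 ≤ θ) (hθ1 : θ ≤ 1)
    (hθ : ∀ t : ZMod p, t ≠ 0 → Complex.abs (phi μ t) ≤ θ)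
    {n d : ℕ} (v : Fin d → Fin n → ZMod p) (m₂ : ℕ)
    (hrob : ∀ l : Fin d → ZMod p, l ≠ 0 →
      m₂ ≤ (univ.filter (fun c : Fin n => (∑ j, l j * v j c) ≠ 0)).card) :
    (∑ x ∈ univ.filter (fun x : Fin n → ZMod p => ∀ j, ∑ c, v j c * x c = 0), ∏ i, μ (x i))
      ≤ ((p : ℝ)⁻¹) ^ d + θ ^ m₂ := by
  haveI : NeZero p := ⟨(Fact.out : p.Prime).ne_zero⟩
  have hp0 : (0 : ℝ) < p := by exact_mod_cast (Fact.out : p.Prime).pos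
  refine le_trans (pl_bound μ hμ0 v) ?_
  have hterm : ∀ l : Fin d → ZMod p, l ≠ 0 →
      (∏ c, Complex.abs (phi μ (∑ j, l j * v j c))) ≤ θ ^ m₂ := by
    intro l hl
    set w : Fin n → ZMod p := fun c => ∑ j, l j * v j c with hw
    have h1 : ∏ c, Complex.abs (phi μ (w c)) =
        (∏ c ∈ univ.filter (fun c => w c ≠ 0), Complex.abs (phi μ (w c))) *
          ∏ c ∈ univ.filter (fun c => ¬ (w c ≠ 0)), Complex.abs (phi μ (w c)) :=
      (Finset.prod_filter_mul_prod_filter_not univ _ _).symm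
    rw [h1]
    have h2 : (∏ c ∈ univ.filter (fun c => w c ≠ 0), Complex.abs (phi μ (w c)))
        ≤ θ ^ (univ.filter (fun c => w c ≠ 0)).card := by
      rw [← Finset.prod_const]
      refine Finset.prod_le_prod (fun c _ => Complex.abs.nonneg _) fun c hc => ?_
      exact hθ _ (Finset.mem_filter.mp hc).2
    have h3 : (∏ c ∈ univ.filter (fun c => ¬ (w c ≠ 0)), Complex.abs (phi μ (w c))) ≤ 1 :=
      Finset.prod_le_one (fun c _ => Complex.abs.nonneg _)
        (fun c _ => abs_phi_le_one μ hμ0 hμ1 _)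
    have h4 : θ ^ (univ.filter (fun c => w c ≠ 0)).card ≤ θ ^ m₂ :=
      pow_le_pow_of_le_one hθ0 hθ1 (hrob l hl)
    calc (∏ c ∈ univ.filter (fun c => w c ≠ 0), Complex.abs (phi μ (w c))) *
          ∏ c ∈ univ.filter (fun c => ¬ (w c ≠ 0)), Complex.abs (phi μ (w c))
        ≤ θ ^ (univ.filter (fun c => w c ≠ 0)).card * 1 :=
          mul_le_mul h2 h3 (Finset.prod_nonneg fun _ _ => Complex.abs.nonneg _)
            (pow_nonneg hθ0 _)
      _ = θ ^ (univ.filter (fun c => w c ≠ 0)).card := mul_one _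
      _ ≤ θ ^ m₂ := h4
  have hzero : (∏ c, Complex.abs (phi μ (∑ j, (0 : Fin d → ZMod p) j * v j c))) = 1 := by
    have h5 : ∀ c : Fin n, (∑ j, (0 : Fin d → ZMod p) j * v j c) = (0 : ZMod p) := by
      intro c; simp
    rw [Finset.prod_congr rfl fun c _ => by rw [h5 c]]
    rw [phi_zero μ hμ1]
    simp
  have hsplit : ∑ l : Fin d → ZMod p, ∏ c, Complex.abs (phi μ (∑ j, l j * v j c))
      = (∏ c, Complex.abs (phi μ (∑ j, (0 : Fin d → ZMod p) j * v j c)))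
        + ∑ l ∈ (univ : Finset (Fin d → ZMod p)).erase 0,
            ∏ c, Complex.abs (phi μ (∑ j, l j * v j c)) :=
    (Finset.add_sum_erase _ _ (mem_univ 0)).symm
  have hcard : ((univ : Finset (Fin d → ZMod p)).erase 0).card = p ^ d - 1 := by
    rw [Finset.card_erase_of_mem (mem_univ 0), Finset.card_univ]
    congr 1
    rw [Fintype.card_fun]
    simp [ZMod.card]
  have htail : ∑ l ∈ (univ : Finset (Fin d → ZMod p)).erase 0,
      ∏ c, Complex.abs (phi μ (∑ j, l j * v j c)) ≤ ((p : ℝ) ^ d - 1) * θ ^ m₂ := by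
    have h6 := Finset.sum_le_card_nsmul ((univ : Finset (Fin d → ZMod p)).erase 0)
      (fun l => ∏ c, Complex.abs (phi μ (∑ j, l j * v j c))) (θ ^ m₂)
      (fun l hl => hterm l (Finset.mem_erase.mp hl).1)
    rw [hcard] at h6
    refine le_trans h6 ?_
    rw [nsmul_eq_mul]
    have h7 : ((p ^ d - 1 : ℕ) : ℝ) = (p : ℝ) ^ d - 1 := by
      have : (1 : ℕ) ≤ p ^ d := Nat.one_le_pow _ _ (Fact.out : p.Prime).pos
      push_cast [Nat.cast_sub this]
      ring
    rw [h7]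
  have hfinal : ((p : ℝ)⁻¹) ^ d * (1 + ((p : ℝ) ^ d - 1) * θ ^ m₂)
      ≤ ((p : ℝ)⁻¹) ^ d + θ ^ m₂ := by
    have hQ : ((p : ℝ)⁻¹) ^ d * ((p : ℝ)) ^ d = 1 := by
      rw [inv_pow, inv_mul_cancel₀ (pow_ne_zero _ (ne_of_gt hp0))]
    have hq0 : 0 ≤ ((p : ℝ)⁻¹) ^ d := by positivity
    have hm0 : 0 ≤ θ ^ m₂ := pow_nonneg hθ0 _
    nlinarith [hq0, hm0]
  calc ((p : ℝ)⁻¹) ^ d * ∑ l : Fin d → ZMod p, ∏ c, Complex.abs (phi μ (∑ j, l j * v j c))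
      ≤ ((p : ℝ)⁻¹) ^ d * (1 + ((p : ℝ) ^ d - 1) * θ ^ m₂) := by
        refine mul_le_mul_of_nonneg_left ?_ (by positivity)
        rw [hsplit, hzero]
        linarith [htail]
    _ ≤ ((p : ℝ)⁻¹) ^ d + θ ^ m₂ := hfinal

lemma pl_indep (μ : ZMod p → ℝ) (hμ0 : ∀ z, 0 ≤ μ z) (hμ1 : ∑ z, μ z = 1)
    (θ : ℝ) (hθ0 : 0 ≤ θ)
    (hθ : ∀ t : ZMod p, t ≠ 0 → Complex.abs (phi μ t) ≤ θ)
    {n d : ℕ} (v : Fin d → Fin n → ZMod p) (hv : LinearIndependent (ZMod p) v) :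
    (∑ x ∈ univ.filter (fun x : Fin n → ZMod p => ∀ j, ∑ c, v j c * x c = 0), ∏ i, μ (x i))
      ≤ ((1 + ((p : ℝ) - 1) * θ) / p) ^ d := by
  haveI : NeZero p := ⟨(Fact.out : p.Prime).ne_zero⟩
  have hp0 : (0 : ℝ) < p := by exact_mod_cast (Fact.out : p.Prime).pos
  obtain ⟨g, hg, hLbij⟩ := exists_coords v hv
  refine le_trans (pl_bound μ hμ0 v) ?_
  set B : ZMod p → ℝ := fun t => if t = 0 then 1 else θ with hB
  have hB0 : ∀ t, 0 ≤ B t := by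
    intro t; dsimp only [B]; split_ifs
    · norm_num
    · exact hθ0
  have hstep : ∀ l : Fin d → ZMod p,
      ∏ c, Complex.abs (phi μ (∑ j, l j * v j c)) ≤ ∏ j', B (∑ j, l j * v j (g j')) := by
    intro l
    set w : Fin n → ZMod p := fun c => ∑ j, l j * v j c with hw
    have hsplit2 : ∏ c, Complex.abs (phi μ (w c)) =
        (∏ c ∈ univ \ univ.image g, Complex.abs (phi μ (w c))) *
          ∏ c ∈ univ.image g, Complex.abs (phi μ (w c)) :=
      (Finset.prod_sdiff (subset_univ _)).symm
    have h1 : (∏ c ∈ univ \ univ.image g, Complex.abs (phi μ (w c))) ≤ 1 :=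
      Finset.prod_le_one (fun c _ => Complex.abs.nonneg _)
        (fun c _ => abs_phi_le_one μ hμ0 hμ1 _)
    have h2 : ∏ c ∈ univ.image g, Complex.abs (phi μ (w c))
        = ∏ j', Complex.abs (phi μ (w (g j'))) :=
      Finset.prod_image (fun a _ b _ h => hg h)
    have h3 : ∏ j', Complex.abs (phi μ (w (g j'))) ≤ ∏ j', B (w (g j')) := by
      refine Finset.prod_le_prod (fun j' _ => Complex.abs.nonneg _) fun j' _ => ?_
      dsimp only [B]
      split_ifs with h
      · rw [h, phi_zero μ hμ1]; simp
      · exact hθ _ h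
    calc ∏ c, Complex.abs (phi μ (w c))
        = (∏ c ∈ univ \ univ.image g, Complex.abs (phi μ (w c))) *
            ∏ c ∈ univ.image g, Complex.abs (phi μ (w c)) := hsplit2
      _ ≤ 1 * ∏ c ∈ univ.image g, Complex.abs (phi μ (w c)) := by
          refine mul_le_mul_of_nonneg_right h1 ?_
          exact Finset.prod_nonneg fun _ _ => Complex.abs.nonneg _
      _ = ∏ j', Complex.abs (phi μ (w (g j'))) := by rw [one_mul, h2]
      _ ≤ ∏ j', B (w (g j')) := h3
  have hbij : ∑ l : Fin d → ZMod p, ∏ j', B (∑ j, l j * v j (g j'))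
      = ∑ η : Fin d → ZMod p, ∏ j', B (η j') :=
    Fintype.sum_bijective _ hLbij _ _ (fun l => rfl)
  have hprod : ∑ η : Fin d → ZMod p, ∏ j', B (η j') = (∑ t : ZMod p, B t) ^ d := by
    rw [← Fintype.prod_sum fun (_ : Fin d) (t : ZMod p) => B t]
    rw [Finset.prod_const, Finset.card_univ, Fintype.card_fin]
  have hBsum : ∑ t : ZMod p, B t = 1 + ((p : ℝ) - 1) * θ := by
    rw [← Finset.add_sum_erase _ _ (mem_univ (0 : ZMod p))]
    dsimp only [B]
    rw [if_pos rfl]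
    congr 1
    have h8 : ∀ t ∈ (univ : Finset (ZMod p)).erase 0, (if t = 0 then (1:ℝ) else θ) = θ := by
      intro t ht
      rw [if_neg (Finset.mem_erase.mp ht).1]
    rw [Finset.sum_congr rfl h8, Finset.sum_const, nsmul_eq_mul,
      Finset.card_erase_of_mem (mem_univ 0), Finset.card_univ, ZMod.card]
    have h9 : ((p - 1 : ℕ) : ℝ) = (p : ℝ) - 1 := by
      have : (1 : ℕ) ≤ p := (Fact.out : p.Prime).pos
      push_cast [Nat.cast_sub this]
      ring
    rw [h9]
  calc ((p : ℝ)⁻¹) ^ d * ∑ l : Fin d → ZMod p, ∏ c, Complex.abs (phi μ (∑ j, l j * v j c))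
      ≤ ((p : ℝ)⁻¹) ^ d * ∑ l : Fin d → ZMod p, ∏ j', B (∑ j, l j * v j (g j')) := by
        refine mul_le_mul_of_nonneg_left ?_ (by positivity)
        exact Finset.sum_le_sum fun l _ => hstep l
    _ = ((p : ℝ)⁻¹) ^ d * (1 + ((p : ℝ) - 1) * θ) ^ d := by rw [hbij, hprod, hBsum]
    _ = ((1 + ((p : ℝ) - 1) * θ) / p) ^ d := by
        rw [div_pow, inv_pow, div_eq_inv_mul]

lemma rows_indep {m : Type*} [Fintype m] [DecidableEq m] (A : Matrix m m (ZMod p))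
    (h : A.rank = Fintype.card m) :
    LinearIndependent (ZMod p) (fun i => A i) := by
  show LinearIndependent (ZMod p) A.row
  rw [← Matrix.vecMul_injective_iff]
  have hrankT : Aᵀ.rank = Fintype.card m := by rw [Matrix.rank_transpose]; exact h
  have hrange : LinearMap.range Aᵀ.mulVecLin = ⊤ := by
    apply Submodule.eq_top_of_finrank_eq
    rw [← Matrix.rank, hrankT]
    simp
  have hsurj : Function.Surjective Aᵀ.mulVecLin := LinearMap.range_eq_top.mp hrange
  have hinj : Function.Injective (Aᵀ.mulVec) :=
    (LinearMap.injective_iff_surjective).mpr hsurj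
  intro x y hxy
  apply hinj
  show Aᵀ *ᵥ x = Aᵀ *ᵥ y
  rw [Matrix.mulVec_transpose, Matrix.mulVec_transpose]
  exact hxy

lemma exists_indep_family {n t : ℕ} (S : Set (Fin n → ZMod p))
    (h : t ≤ Module.finrank (ZMod p) (span (ZMod p) S)) :
    ∃ u : Fin t → (Fin n → ZMod p), (∀ j, u j ∈ S) ∧ LinearIndependent (ZMod p) u := by
  obtain ⟨b, hbsub, hbspan, hbind⟩ := exists_linearIndependent (ZMod p) S
  haveI : Fintype b := Fintype.ofFinite _
  have hbcard : t ≤ Fintype.card b := by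
    have h1 : Module.finrank (ZMod p) (span (ZMod p) b) = b.toFinset.card :=
      finrank_span_set_eq_card hbind
    rw [hbspan] at h1
    rw [← Set.toFinset_card]
    omega
  set e : b ≃ Fin (Fintype.card b) := Fintype.equivFin b with he
  set f : Fin t → b := fun j => e.symm (Fin.castLE hbcard j) with hf
  have hfinj : Function.Injective f := by
    intro j1 j2 hj
    have := e.symm.injective hj
    exact Fin.castLE_injective _ this
  refine ⟨fun j => ↑(f j), fun j => hbsub (f j).2, ?_⟩
  exact hbind.comp f hfinj

lemma sum_biUnion_le_nonneg {α β : Type*} [DecidableEq β] {f : β → ℝ} (hf : ∀ x, 0 ≤ f x)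
    (s : Finset α) (t : α → Finset β) :
    ∑ x ∈ s.biUnion t, f x ≤ ∑ a ∈ s, ∑ x ∈ t a, f x := by
  classical
  induction s using Finset.induction_on with
  | empty => simp
  | insert a s ha ih =>
    rw [Finset.biUnion_insert, Finset.sum_insert ha]
    have h1 := Finset.sum_union_inter (s₁ := t a) (s₂ := s.biUnion t) (f := f)
    have h2 : 0 ≤ ∑ x ∈ t a ∩ s.biUnion t, f x := Finset.sum_nonneg fun x _ => hf x
    linarith

end RHR

/-- For a prime `p ≥ 3`, a distribution `μ` on `F_p` supported on more than one value,
`r, ℓ ≥ 1` and `ε > 0`, there is `D ∈ ℕ` such that for all `n ≥ 1`: if `M` is an `n × n` matrix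
over `F_p` and `I_1, …, I_D ⊆ {1,…,n}` are pairwise disjoint size-`r` sets with
`rank M[I_i × I_i] = r` for each `i`, then for a random vector `x` with independent
`μ`-distributed entries, the probability that `Mx` has at most `ℓ` nonzero entries is at most
`2 p^{-r} + ε`. -/
theorem robust_high_rank_hamming_anticoncentration (p : ℕ) [Fact p.Prime] (hp3 : 3 ≤ p)
    (μ : ZMod p → ℝ) (hμ0 : ∀ z, 0 ≤ μ z) (hμ1 : ∑ z, μ z = 1)
    (hμsupp : ∃ a b : ZMod p, a ≠ b ∧ μ a ≠ 0 ∧ μ b ≠ 0)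
    (r ℓ : ℕ) (hr : 1 ≤ r) (hℓ : 1 ≤ ℓ) (ε : ℝ) (hε : 0 < ε) :
    ∃ D : ℕ, ∀ n : ℕ, 1 ≤ n →
      ∀ M : Matrix (Fin n) (Fin n) (ZMod p),
      ∀ I : Fin D → Finset (Fin n),
        (∀ i, (I i).card = r) →
        (∀ i j, i ≠ j → Disjoint (I i) (I j)) →
        (∀ i, (M.submatrix (fun a : ↥(I i) => (a : Fin n))
            (fun a : ↥(I i) => (a : Fin n))).rank = r) →
        (∑ x ∈ Finset.univ.filter
            (fun x : Fin n → ZMod p =>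
              (Finset.univ.filter (fun i : Fin n => M.mulVec x i ≠ 0)).card ≤ ℓ),
            ∏ i, μ (x i))
          ≤ 2 * ((p : ℝ))⁻¹ ^ r + ε := by
  obtain ⟨a₀, b₀, hab, ha₀, hb₀⟩ := hμsupp
  have hp : p.Prime := Fact.out
  haveI : NeZero p := ⟨hp.ne_zero⟩
  haveI : Fact (1 < p) := ⟨hp.one_lt⟩
  have hp0R : (0 : ℝ) < p := by exact_mod_cast hp.pos
  have hp1R : (1 : ℝ) < p := by exact_mod_cast hp.one_lt
  -- θ and its properties
  have hne : ((Finset.univ : Finset (ZMod p)).erase 0).Nonempty :=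
    ⟨1, Finset.mem_erase.mpr ⟨one_ne_zero, Finset.mem_univ _⟩⟩
  set θ : ℝ := (((Finset.univ : Finset (ZMod p)).erase 0).sup' hne
    (fun t => Complex.abs (RHR.phi μ t))) with hθdef
  have hθle : ∀ t : ZMod p, t ≠ 0 → Complex.abs (RHR.phi μ t) ≤ θ := by
    intro t ht
    rw [hθdef]
    exact Finset.le_sup' (fun t => Complex.abs (RHR.phi μ t))
      (Finset.mem_erase.mpr ⟨ht, Finset.mem_univ _⟩)
  have hθ0 : 0 ≤ θ := le_trans (Complex.abs.nonneg _) (hθle 1 one_ne_zero)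
  have hθ1 : θ < 1 := by
    rw [hθdef, Finset.sup'_lt_iff]
    intro t ht
    exact RHR.abs_phi_lt_one μ hμ0 hμ1 hab ha₀ hb₀ (Finset.mem_erase.mp ht).1
  -- ρ
  set ρ : ℝ := (1 + ((p : ℝ) - 1) * θ) / p with hρdef
  have hρ0 : 0 ≤ ρ := by
    apply div_nonneg _ (le_of_lt hp0R)
    nlinarith [hθ0, hp1R]
  have hρ1 : ρ < 1 := by
    rw [hρdef, div_lt_one hp0R]
    nlinarith [hθ1, hp1R, hθ0]
  -- choice of s₁
  obtain ⟨s₁, hs₁1, hs₁⟩ : ∃ s₁ : ℕ, 1 ≤ s₁ ∧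
      ((s₁ : ℝ)) ^ ℓ * ρ ^ s₁ ≤ ε / ((r * ℓ + 1 : ℕ) : ℝ) ^ ℓ := by
    have htend := tendsto_pow_const_mul_const_pow_of_lt_one ℓ hρ0 hρ1
    have hpos : (0 : ℝ) < ε / ((r * ℓ + 1 : ℕ) : ℝ) ^ ℓ := by positivity
    have hev := htend.eventually_lt_const hpos
    obtain ⟨s₁, hlt, h1⟩ := (hev.and (Filter.eventually_ge_atTop 1)).exists
    exact ⟨s₁, h1, le_of_lt hlt⟩
  -- choice of m₂
  obtain ⟨m₂, hm₂⟩ : ∃ m₂ : ℕ, θ ^ m₂ ≤ ((p : ℝ)⁻¹) ^ r := by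
    obtain ⟨m₂, h⟩ := exists_pow_lt_of_lt_one (show (0 : ℝ) < ((p : ℝ)⁻¹) ^ r by positivity) hθ1
    exact ⟨m₂, le_of_lt h⟩
  set m₁ := r * ℓ + s₁ with hm₁def
  set K := m₂ + ℓ + 1 with hKdef
  set D := m₁ + p ^ (r * (r * m₁)) * K with hDdef
  refine ⟨D, ?_⟩
  intro n hn M I hIcard hIdisj hIrank
  have hfnn : ∀ x : Fin n → ZMod p, 0 ≤ ∏ i, μ (x i) := fun x =>
    Finset.prod_nonneg fun i _ => hμ0 _
  -- restricted and full row independence of each block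
  have hrestr : ∀ i : Fin D,
      LinearIndependent (ZMod p)
        (fun b : ↥(I i) => fun a : ↥(I i) => M (↑b : Fin n) (↑a : Fin n)) := by
    intro i
    have hc : (M.submatrix (fun a : ↥(I i) => (a : Fin n))
        (fun a : ↥(I i) => (a : Fin n))).rank = Fintype.card ↥(I i) := by
      rw [hIrank i, Fintype.card_coe, hIcard i]
    exact RHR.rows_indep _ hc
  have hfull : ∀ i : Fin D,
      LinearIndependent (ZMod p) (fun b : ↥(I i) => M (↑b : Fin n)) := by
    intro i
    exact LinearIndependent.of_comp
      (LinearMap.funLeft (ZMod p) (ZMod p) (fun a : ↥(I i) => (↑a : Fin n))) (hrestr i)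
  -- few bad blocks
  have hfew : ∀ x : Fin n → ZMod p,
      (Finset.univ.filter (fun i : Fin n => M.mulVec x i ≠ 0)).card ≤ ℓ →
      ∀ C' : Finset (Fin D),
        (C'.filter (fun i => ∃ a ∈ I i, M.mulVec x a ≠ 0)).card ≤ ℓ := by
    intro x hx C'
    classical
    set f : Fin D → Fin n := fun i =>
      if h : ∃ a : Fin n, a ∈ I i ∧ M.mulVec x a ≠ 0 then h.choose else ⟨0, by omega⟩ with hf
    have hfspec : ∀ i : Fin D, (∃ a : Fin n, a ∈ I i ∧ M.mulVec x a ≠ 0) →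
        f i ∈ I i ∧ M.mulVec x (f i) ≠ 0 := by
      intro i hex
      rw [hf]
      dsimp only
      rw [dif_pos hex]
      exact hex.choose_spec
    refine le_trans (Finset.card_le_card_of_injOn f ?_ ?_) hx
    · intro i hi
      obtain ⟨a, ha1, ha2⟩ := (Finset.mem_filter.mp hi).2
      have hspec := hfspec i ⟨a, ha1, ha2⟩
      exact Finset.mem_filter.mpr ⟨Finset.mem_univ _, hspec.2⟩
    · intro i hi j hj hij
      by_contra hne
      obtain ⟨a, ha1, ha2⟩ := (Finset.mem_filter.mp hi).2
      obtain ⟨a', ha1', ha2'⟩ := (Finset.mem_filter.mp hj).2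
      have hfi := (hfspec i ⟨a, ha1, ha2⟩).1
      have hfj := (hfspec j ⟨a', ha1', ha2'⟩).1
      rw [hij] at hfi
      exact Finset.disjoint_left.mp (hIdisj i j hne) (hij ▸ (hfspec i ⟨a, ha1, ha2⟩).1) hfj
  -- row sets and ranks
  set rset : Finset (Fin D) → Finset (Fin n → ZMod p) :=
    fun G => (G.biUnion I).image (fun a => M a) with hrset
  set dd : Finset (Fin D) → ℕ := fun G =>
    Module.finrank (ZMod p)
      (Submodule.span (ZMod p) ((rset G : Set (Fin n → ZMod p)))) with hdd
  have hmem_rset : ∀ (G : Finset (Fin D)) (i : Fin D) (a : Fin n), i ∈ G → a ∈ I i →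
      M a ∈ rset G := by
    intro G i a hi ha
    rw [hrset]
    exact Finset.mem_image.mpr ⟨a, Finset.mem_biUnion.mpr ⟨i, hi, ha⟩, rfl⟩
  have hdd_single : ∀ i : Fin D, r ≤ dd {i} := by
    intro i
    have hr1 : ((rset {i} : Finset (Fin n → ZMod p)) : Set (Fin n → ZMod p))
        = Set.range (fun b : ↥(I i) => M (↑b : Fin n)) := by
      rw [hrset]
      dsimp only
      rw [Finset.singleton_biUnion, Finset.coe_image]
      ext w
      constructor
      · rintro ⟨a, ha, rfl⟩
        exact ⟨⟨a, ha⟩, rfl⟩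
      · rintro ⟨b, rfl⟩
        exact ⟨↑b, b.2, rfl⟩
    rw [hdd]
    dsimp only
    rw [hr1, finrank_span_eq_card (hfull i)]
    rw [Fintype.card_coe, hIcard i]
  have hdd_le : ∀ G : Finset (Fin D), dd G ≤ r * G.card := by
    intro G
    calc dd G ≤ (rset G).card := finrank_span_finset_le_card _
      _ ≤ (G.biUnion I).card := Finset.card_image_le
      _ ≤ ∑ i ∈ G, (I i).card := Finset.card_biUnion_le
      _ = r * G.card := by
          rw [Finset.sum_congr rfl (fun i _ => hIcard i), Finset.sum_const, smul_eq_mul,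
            mul_comm]
  have hdd_sdiff : ∀ (G B : Finset (Fin D)), dd G ≤ dd (G \ B) + r * B.card := by
    intro G B
    set W1 := Submodule.span (ZMod p) ((rset (G \ B) : Set (Fin n → ZMod p))) with hW1
    set W2 := Submodule.span (ZMod p) ((rset B : Set (Fin n → ZMod p))) with hW2
    have hsub : ((rset G : Set (Fin n → ZMod p)))
        ⊆ ((rset (G \ B) : Set (Fin n → ZMod p))) ∪ ((rset B : Set (Fin n → ZMod p))) := by
      intro w hw
      rw [Finset.mem_coe, hrset] at hw
      simp only [Finset.mem_image, Finset.mem_biUnion] at hw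
      obtain ⟨a, ⟨i, hiG, haI⟩, rfl⟩ := hw
      by_cases hiB : i ∈ B
      · right; exact Finset.mem_coe.mpr (hmem_rset B i a hiB haI)
      · left
        exact Finset.mem_coe.mpr (hmem_rset (G \ B) i a (Finset.mem_sdiff.mpr ⟨hiG, hiB⟩) haI)
    have h1 : Submodule.span (ZMod p) ((rset G : Set (Fin n → ZMod p))) ≤ W1 ⊔ W2 := by
      rw [hW1, hW2, ← Submodule.span_union]
      exact Submodule.span_mono hsub
    have h2 := Submodule.finrank_add_le_finrank_add_finrank W1 W2
    have h3 : Module.finrank (ZMod p) W2 ≤ r * B.card := by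
      have h3a : Module.finrank (ZMod p) W2 ≤ (rset B).card := finrank_span_finset_le_card _
      have h3b : (rset B).card ≤ (B.biUnion I).card := Finset.card_image_le
      have h3c : (B.biUnion I).card ≤ ∑ i ∈ B, (I i).card := Finset.card_biUnion_le
      have h3d : ∑ i ∈ B, (I i).card = r * B.card := by
        rw [Finset.sum_congr rfl (fun i _ => hIcard i), Finset.sum_const, smul_eq_mul,
          mul_comm]
      omega
    have h4 := Submodule.finrank_mono h1
    have h5 : dd G = Module.finrank (ZMod p)
        (Submodule.span (ZMod p) ((rset G : Set (Fin n → ZMod p)))) := rfl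
    have h6 : dd (G \ B) = Module.finrank (ZMod p) W1 := rfl
    omega
  -- greedy maximal independent-ish set
  set 𝒮 : Finset (Finset (Fin D)) := (Finset.univ : Finset (Fin D)).powerset.filter
    (fun G => G.Nonempty ∧ G.card ≤ m₁ ∧ r + G.card ≤ dd G + 1) with h𝒮
  have hm₁1 : 1 ≤ m₁ := by omega
  have hD1 : 1 ≤ D := by
    have : 1 ≤ m₁ := hm₁1
    omega
  set i₀ : Fin D := ⟨0, by omega⟩ with hi₀
  have h𝒮ne : 𝒮.Nonempty := by
    refine ⟨{i₀}, Finset.mem_filter.mpr ⟨Finset.mem_powerset.mpr (Finset.subset_univ _),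
      ⟨i₀, Finset.mem_singleton_self _⟩, ?_, ?_⟩⟩
    · simpa using hm₁1
    · have := hdd_single i₀
      rw [Finset.card_singleton]
      omega
  obtain ⟨G, hG𝒮, hGmax⟩ := Finset.exists_max_image 𝒮 (fun G => G.card) h𝒮ne
  have hGfacts := (Finset.mem_filter.mp hG𝒮).2
  obtain ⟨hGne, hGcard, hGrank⟩ := hGfacts
  by_cases hcase : G.card = m₁
  · -- CASE A
    set 𝔅 := Finset.powersetCard ℓ G with h𝔅
    have hrl : ℓ ≤ r * ℓ := Nat.le_mul_of_pos_left ℓ (by omega)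
    have hℓm₁ : ℓ ≤ m₁ := by omega
    have hcover : (Finset.univ.filter (fun x : Fin n → ZMod p =>
        (Finset.univ.filter (fun i : Fin n => M.mulVec x i ≠ 0)).card ≤ ℓ))
        ⊆ 𝔅.biUnion (fun B => Finset.univ.filter
            (fun x : Fin n → ZMod p => ∀ w ∈ rset (G \ B), ∑ c, w c * x c = 0)) := by
      intro x hx
      have hxev := (Finset.mem_filter.mp hx).2
      have hbadcard : (G.filter (fun i => ∃ a ∈ I i, M.mulVec x a ≠ 0)).card ≤ ℓ := hfew x hxev G
      obtain ⟨B, hbadB, hBG, hBcard⟩ := Finset.exists_subsuperset_card_eq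
        (Finset.filter_subset _ _) hbadcard (by rw [hcase]; exact hℓm₁)
      rw [Finset.mem_biUnion]
      refine ⟨B, Finset.mem_powersetCard.mpr ⟨hBG, hBcard⟩, Finset.mem_filter.mpr
        ⟨Finset.mem_univ _, ?_⟩⟩
      intro w hw
      rw [hrset] at hw
      obtain ⟨a, haU, rfl⟩ := Finset.mem_image.mp hw
      obtain ⟨i, hiGB, haI⟩ := Finset.mem_biUnion.mp haU
      have hiG : i ∈ G := (Finset.mem_sdiff.mp hiGB).1
      have hiB : i ∉ B := (Finset.mem_sdiff.mp hiGB).2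
      have hnotbad : i ∉ G.filter (fun i => ∃ a ∈ I i, M.mulVec x a ≠ 0) :=
        fun hbadi => hiB (hbadB hbadi)
      have hzero : M.mulVec x a = 0 := by
        by_contra hne2
        exact hnotbad (Finset.mem_filter.mpr ⟨hiG, ⟨a, haI, hne2⟩⟩)
      simpa [Matrix.mulVec, dotProduct] using hzero
    refine le_trans (Finset.sum_le_sum_of_subset_of_nonneg hcover (fun x _ _ => hfnn x)) ?_
    refine le_trans (RHR.sum_biUnion_le_nonneg hfnn 𝔅 _) ?_
    have hperB : ∀ B ∈ 𝔅, (∑ x ∈ Finset.univ.filter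
        (fun x : Fin n → ZMod p => ∀ w ∈ rset (G \ B), ∑ c, w c * x c = 0),
          ∏ i, μ (x i)) ≤ ρ ^ s₁ := by
      intro B hB
      obtain ⟨hBG, hBcard⟩ := Finset.mem_powersetCard.mp hB
      have h1 : dd G ≤ dd (G \ B) + r * ℓ := by
        have := hdd_sdiff G B
        rw [hBcard] at this
        exact this
      have h2 : r + m₁ ≤ dd G + 1 := by rw [← hcase]; exact hGrank
      have h3 : s₁ ≤ dd (G \ B) := by
        rw [hm₁def] at h2
        omega
      have h3' : s₁ ≤ Module.finrank (ZMod p)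
          (Submodule.span (ZMod p) ((rset (G \ B) : Finset _) : Set (Fin n → ZMod p))) := h3
      obtain ⟨u, huS, huind⟩ := RHR.exists_indep_family
        ((rset (G \ B) : Finset _) : Set (Fin n → ZMod p)) h3'
      have hsubev : (Finset.univ.filter
          (fun x : Fin n → ZMod p => ∀ w ∈ rset (G \ B), ∑ c, w c * x c = 0))
          ⊆ Finset.univ.filter (fun x : Fin n → ZMod p => ∀ j, ∑ c, u j c * x c = 0) := by
        intro x hx
        rw [Finset.mem_filter] at hx ⊢
        exact ⟨Finset.mem_univ _, fun j => hx.2 _ (Finset.mem_coe.mp (huS j))⟩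
      refine le_trans (Finset.sum_le_sum_of_subset_of_nonneg hsubev (fun x _ _ => hfnn x)) ?_
      exact RHR.pl_indep μ hμ0 hμ1 θ hθ0 hθle u huind
    refine le_trans (Finset.sum_le_sum hperB) ?_
    rw [Finset.sum_const, h𝔅, Finset.card_powersetCard, hcase, nsmul_eq_mul]
    have hch : ((m₁.choose ℓ : ℕ) : ℝ) ≤ ((m₁ : ℝ)) ^ ℓ := by
      exact_mod_cast Nat.choose_le_pow m₁ ℓ
    have hm₁le : ((m₁ : ℝ)) ≤ ((r * ℓ + 1 : ℕ) : ℝ) * (s₁ : ℝ) := by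
      have h5 : m₁ ≤ (r * ℓ + 1) * s₁ := by
        rw [hm₁def]
        have : r * ℓ ≤ r * ℓ * s₁ := Nat.le_mul_of_pos_right _ (by omega)
        nlinarith
      exact_mod_cast h5
    have hnum : ((m₁.choose ℓ : ℕ) : ℝ) * ρ ^ s₁ ≤ ε := by
      have hρs : (0 : ℝ) ≤ ρ ^ s₁ := pow_nonneg hρ0 _
      calc ((m₁.choose ℓ : ℕ) : ℝ) * ρ ^ s₁ ≤ ((m₁ : ℝ)) ^ ℓ * ρ ^ s₁ :=
            mul_le_mul_of_nonneg_right hch hρs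
        _ ≤ (((r * ℓ + 1 : ℕ) : ℝ) * (s₁ : ℝ)) ^ ℓ * ρ ^ s₁ := by
            refine mul_le_mul_of_nonneg_right (pow_le_pow_left₀ (by positivity) hm₁le ℓ) hρs
        _ = ((r * ℓ + 1 : ℕ) : ℝ) ^ ℓ * ((s₁ : ℝ) ^ ℓ * ρ ^ s₁) := by
            rw [mul_pow]; ring
        _ ≤ ((r * ℓ + 1 : ℕ) : ℝ) ^ ℓ * (ε / ((r * ℓ + 1 : ℕ) : ℝ) ^ ℓ) := by
            refine mul_le_mul_of_nonneg_left hs₁ (by positivity)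
        _ = ε := by
            field_simp
    have hrhs : (0 : ℝ) ≤ 2 * ((p : ℝ))⁻¹ ^ r := by positivity
    linarith
  · -- CASE B
    have hlt : G.card < m₁ := lt_of_le_of_ne hGcard hcase
    have hallrows : ∀ (i : Fin D) (a : Fin n), a ∈ I i →
        M a ∈ Submodule.span (ZMod p) ((rset G : Finset _) : Set (Fin n → ZMod p)) := by
      intro i a ha
      by_cases hiG : i ∈ G
      · exact Submodule.subset_span (Finset.mem_coe.mpr (hmem_rset G i a hiG ha))
      · by_contra hnot
        set G' := insert i G with hG'
        have hcard' : G'.card = G.card + 1 := Finset.card_insert_of_notMem hiG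
        have hlt2 : dd G < dd G' := by
          apply Submodule.finrank_lt_finrank_of_lt
          refine lt_of_le_of_ne
            (Submodule.span_mono ?_) ?_
          · exact_mod_cast Finset.image_subset_image
              (Finset.biUnion_subset_biUnion_of_subset_left _ (Finset.subset_insert i G))
          · intro heq
            apply hnot
            rw [heq]
            exact Submodule.subset_span
              (Finset.mem_coe.mpr (hmem_rset G' i a (Finset.mem_insert_self _ _) ha))
        have hG'𝒮 : G' ∈ 𝒮 := by
          refine Finset.mem_filter.mpr ⟨Finset.mem_powerset.mpr (Finset.subset_univ _),
            ⟨i, Finset.mem_insert_self _ _⟩, ?_, ?_⟩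
          · omega
          · omega
        have := hGmax G' hG'𝒮
        omega
    set U := Submodule.span (ZMod p) ((rset G : Finset _) : Set (Fin n → ZMod p)) with hUdef
    have hUdim : Module.finrank (ZMod p) U ≤ r * m₁ := by
      have h1 : Module.finrank (ZMod p) U = dd G := rfl
      have := hdd_le G
      have h2 : r * G.card ≤ r * m₁ := Nat.mul_le_mul_left r hGcard
      omega
    haveI : Fintype ↥U := Fintype.ofFinite _
    have hUcard : Fintype.card ↥U = p ^ (Module.finrank (ZMod p) U) := by
      rw [Module.card_eq_pow_finrank (K := ZMod p) (V := ↥U), ZMod.card]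
    set en : (i : Fin D) → (Fin r ≃ ↥(I i)) := fun i =>
      (Finset.equivFinOfCardEq (hIcard i)).symm with hen
    set ev : Fin D → Fin r → Fin n := fun i j => ↑(en i j) with hev
    have hevmem : ∀ i j, ev i j ∈ I i := fun i j => (en i j).2
    set Φ : Fin D → (Fin r → ↥U) := fun i => fun j => ⟨M (ev i j), hallrows i _ (hevmem i j)⟩
      with hΦ
    have hcount : (Finset.univ : Finset (Fin r → ↥U)).card * K
        ≤ (Finset.univ : Finset (Fin D)).card := by
      rw [Finset.card_univ, Finset.card_univ, Fintype.card_fin, Fintype.card_fun,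
        Fintype.card_fin, hUcard]
      have hpow : (p ^ Module.finrank (ZMod p) U) ^ r ≤ p ^ (r * (r * m₁)) := by
        rw [← pow_mul]
        refine Nat.pow_le_pow_right hp.pos ?_
        calc Module.finrank (ZMod p) U * r ≤ (r * m₁) * r := Nat.mul_le_mul_right r hUdim
          _ = r * (r * m₁) := by ring
      calc (p ^ Module.finrank (ZMod p) U) ^ r * K ≤ p ^ (r * (r * m₁)) * K :=
            Nat.mul_le_mul_right K hpow
        _ ≤ D := by omega
    haveI : Nonempty (Fin r → ↥U) := ⟨fun _ => 0⟩
    obtain ⟨y, -, hy⟩ := Finset.exists_le_card_fiber_of_mul_le_card_of_maps_to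
      (f := Φ) (t := (Finset.univ : Finset (Fin r → ↥U)))
      (fun a _ => Finset.mem_univ _) Finset.univ_nonempty hcount
    set C := Finset.univ.filter (fun i => Φ i = y) with hCdef
    have hCcard : K ≤ C.card := hy
    set v : Fin r → (Fin n → ZMod p) := fun j => ↑(y j) with hv
    have hvi : ∀ i ∈ C, ∀ j, M (ev i j) = v j := by
      intro i hi j
      have h1 : Φ i = y := (Finset.mem_filter.mp hi).2
      exact congrArg Subtype.val (congrFun h1 j)
    have hcomb : ∀ i ∈ C, ∀ l : Fin r → ZMod p, l ≠ 0 →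
        ∃ a, a ∈ I i ∧ (∑ j, l j * v j a) ≠ 0 := by
      intro i hi l hl
      by_contra hcon
      push_neg at hcon
      have hc0 : ∀ b : ↥(I i), ∑ j, l j * M (ev i j) ↑b = 0 := by
        intro b
        have h1 := hcon ↑b b.2
        calc ∑ j, l j * M (ev i j) ↑b = ∑ j, l j * v j ↑b :=
              Finset.sum_congr rfl (fun j _ => by rw [hvi i hi j])
          _ = 0 := h1
      have hind := hrestr i
      rw [Fintype.linearIndependent_iff] at hind
      have happ := hind (fun b => l ((en i).symm b)) ?_
      · apply hl
        funext j
        have h2 := happ ((en i) j)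
        simpa using h2
      · funext a
        have h3 : (∑ b : ↥(I i), l ((en i).symm b) •
            (fun a' : ↥(I i) => M (↑b : Fin n) (↑a' : Fin n))) a
            = ∑ b : ↥(I i), l ((en i).symm b) * M (↑b : Fin n) (↑a : Fin n) := by
          simp
        rw [h3]
        rw [← Equiv.sum_comp (en i) (fun b => l ((en i).symm b) * M (↑b : Fin n) (↑a : Fin n))]
        simp only [Equiv.symm_apply_apply]
        exact hc0 a
    have hrob : ∀ l : Fin r → ZMod p, l ≠ 0 →
        m₂ ≤ (Finset.univ.filter (fun c : Fin n => (∑ j, l j * v j c) ≠ 0)).card := by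
      intro l hl
      classical
      set f : Fin D → Fin n := fun i =>
        if h : ∃ a, a ∈ I i ∧ (∑ j, l j * v j a) ≠ 0 then h.choose else ⟨0, by omega⟩ with hfdef
      have hfspec : ∀ i ∈ C, f i ∈ I i ∧ (∑ j, l j * v j (f i)) ≠ 0 := by
        intro i hi
        have hex := hcomb i hi l hl
        rw [hfdef]
        dsimp only
        rw [dif_pos hex]
        exact hex.choose_spec
      have hcle : C.card ≤ (Finset.univ.filter
          (fun c : Fin n => (∑ j, l j * v j c) ≠ 0)).card := by
        refine Finset.card_le_card_of_injOn f ?_ ?_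
        · intro i hi
          exact Finset.mem_filter.mpr ⟨Finset.mem_univ _, (hfspec i hi).2⟩
        · intro i hi j hj hij
          by_contra hne
          have hfi := (hfspec i hi).1
          have hfj := (hfspec j hj).1
          exact Finset.disjoint_left.mp (hIdisj i j hne) (hij ▸ hfi) hfj
      omega
    have hincl : (Finset.univ.filter (fun x : Fin n → ZMod p =>
        (Finset.univ.filter (fun i : Fin n => M.mulVec x i ≠ 0)).card ≤ ℓ))
        ⊆ Finset.univ.filter (fun x : Fin n → ZMod p => ∀ j, ∑ c, v j c * x c = 0) := by
      intro x hx
      have hxev := (Finset.mem_filter.mp hx).2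
      have hbadC := hfew x hxev C
      have hnotsub : ¬ (C ⊆ C.filter (fun i => ∃ a ∈ I i, M.mulVec x a ≠ 0)) := by
        intro hsub
        have := Finset.card_le_card hsub
        omega
      obtain ⟨i, hiC2, hibad⟩ := Finset.not_subset.mp hnotsub
      have hzero : ∀ a ∈ I i, M.mulVec x a = 0 := by
        intro a ha
        by_contra hne2
        exact hibad (Finset.mem_filter.mpr ⟨hiC2, ⟨a, ha, hne2⟩⟩)
      refine Finset.mem_filter.mpr ⟨Finset.mem_univ _, fun j => ?_⟩
      have h1 := hzero (ev i j) (hevmem i j)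
      have h2 : (∑ c, v j c * x c) = M.mulVec x (ev i j) := by
        rw [← hvi i hiC2 j]
        simp [Matrix.mulVec, dotProduct]
      rw [h2, h1]
    refine le_trans (Finset.sum_le_sum_of_subset_of_nonneg hincl (fun x _ _ => hfnn x)) ?_
    refine le_trans (RHR.pl_robust μ hμ0 hμ1 θ hθ0 (le_of_lt hθ1) hθle v m₂ hrob) ?_
    have h6 : ((p : ℝ)⁻¹) ^ r = ((p : ℝ))⁻¹ ^ r := rfl
    linarith [hm₂, le_of_lt hε]
end

section
/- Let p be a prime, let μ be a probability distribution on F_p, and let ρ = max_{z ∈ F_p} μ(z). Let x ∈ F_p^n be a random vector with independent μ-distributed entries. Then for any matrix M ∈ F_p^{m×n} and any vector z ∈ F_p^m, we have Pr[Mx = z] ≤ ρ^{rank M}. -/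
open scoped Classical
open Matrix

/-- For a prime `p`, a probability distribution `μ` on `F_p` with maximum point probability `ρ`,
and a random vector `x ∈ F_p^n` with independent `μ`-distributed entries: for any `m × n` matrix
`M` over `F_p` and any `z ∈ F_p^m`, `Pr[Mx = z] ≤ ρ^{rank M}`. -/
theorem anticoncentration_rank_bound (p : ℕ) [Fact p.Prime]
    (μ : ZMod p → ℝ) (hμ0 : ∀ z, 0 ≤ μ z) (hμ1 : ∑ z, μ z = 1)
    (ρ : ℝ) (hρ : IsGreatest (Set.range μ) ρ)
    (m n : ℕ) (M : Matrix (Fin m) (Fin n) (ZMod p)) (z : Fin m → ZMod p) :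
    (∑ x ∈ Finset.univ.filter (fun x : Fin n → ZMod p => M.mulVec x = z),
        ∏ i, μ (x i))
      ≤ ρ ^ M.rank := by
  classical
  obtain ⟨z0, hz0⟩ := hρ.1
  have hρ0 : 0 ≤ ρ := hz0 ▸ hμ0 z0
  have hμρ : ∀ w, μ w ≤ ρ := fun w => hρ.2 ⟨w, rfl⟩
  -- columns
  set t : Set (Fin m → ZMod p) := Set.range Mᵀ with ht
  obtain ⟨b, hbt, hspan, hli⟩ := exists_linearIndependent (ZMod p) t
  have hbfin : b.Finite := (Set.finite_range Mᵀ).subset hbt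
  haveI : Fintype b := hbfin.fintype
  have hrank : M.rank = Fintype.card b := by
    rw [Matrix.rank_eq_finrank_span_cols]
    change Module.finrank (ZMod p) (Submodule.span (ZMod p) (Set.range Mᵀ)) = _
    rw [← ht, ← hspan,
      finrank_span_set_eq_card hli, Set.toFinset_card]
  -- a section picking column indices
  have hsec : ∀ v : b, ∃ j, Mᵀ j = (v : Fin m → ZMod p) := fun v => hbt v.2
  choose g hg using hsec
  have ginj : Function.Injective g := by
    intro a c h
    exact Subtype.ext (by rw [← hg a, ← hg c, h])
  set s : Finset (Fin n) := Finset.univ.image g with hs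
  have hscard : s.card = Fintype.card b := by
    rw [hs, Finset.card_image_of_injective _ ginj, Finset.card_univ]
  have hMs : ∀ j ∈ s, Mᵀ j ∈ b := by
    intro j hj
    rw [hs, Finset.mem_image] at hj
    obtain ⟨v, -, rfl⟩ := hj
    rw [hg v]; exact v.2
  -- linear independence of the chosen columns
  have hlis : LinearIndependent (ZMod p) (fun j : s => Mᵀ (j : Fin n)) := by
    have einj : Function.Injective (fun j : s => (⟨Mᵀ (j : Fin n), hMs j j.2⟩ : b)) := by
      intro ⟨j1, hj1⟩ ⟨j2, hj2⟩ h
      have h' : Mᵀ j1 = Mᵀ j2 := congrArg Subtype.val h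
      rw [hs, Finset.mem_image] at hj1 hj2
      obtain ⟨v1, -, rfl⟩ := hj1
      obtain ⟨v2, -, rfl⟩ := hj2
      rw [hg v1, hg v2] at h'
      exact Subtype.ext (congrArg g (Subtype.ext h'))
    exact hli.comp _ einj
  -- key injectivity
  have hmv : ∀ c : Fin n → ZMod p, M.mulVec c = ∑ j, c j • Mᵀ j := by
    intro c
    funext i
    simp [Matrix.mulVec, dotProduct, Finset.sum_apply, Matrix.transpose_apply, mul_comm]
  have hkey : ∀ c : Fin n → ZMod p, (∀ j, j ∉ s → c j = 0) → M.mulVec c = 0 → ∀ j, c j = 0 := by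
    intro c hc hMc j
    by_cases hjs : j ∈ s
    · have h1 : ∑ j : s, c j • Mᵀ (j : Fin n) = 0 := by
        rw [Finset.sum_coe_sort s (fun j => c j • Mᵀ j)]
        rw [hmv] at hMc
        rw [← hMc]
        refine Finset.sum_subset (Finset.subset_univ s) fun x _ hx => ?_
        rw [hc x hx, zero_smul]
      have := Fintype.linearIndependent_iff.mp hlis (fun j : s => c j) h1 ⟨j, hjs⟩
      exact this
    · exact hc j hjs
  have hinj : ∀ a c : Fin n → ZMod p, (∀ j, j ∉ s → a j = c j) →
      M.mulVec a = M.mulVec c → a = c := by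
    intro a c hac hM
    funext j
    have := hkey (a - c) (fun j hj => by simp [hac j hj]) (by rw [Matrix.mulVec_sub, hM, sub_self]) j
    have h0 : a j - c j = 0 := this
    exact sub_eq_zero.mp h0
  -- main computation
  rw [hrank, ← hscard]
  set u : Finset (Fin n) := sᶜ with hu
  set res : (Fin n → ZMod p) → (u → ZMod p) := fun x i => x (i : Fin n) with hres
  set S : Finset (Fin n → ZMod p) :=
    Finset.univ.filter (fun x : Fin n → ZMod p => M.mulVec x = z) with hS
  rw [← Finset.sum_fiberwise_of_maps_to (g := res) (t := (Finset.univ : Finset (u → ZMod p)))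
    (fun x _ => Finset.mem_univ _) (fun x => ∏ i, μ (x i))]
  have houter : ∑ y : u → ZMod p, ∏ i : u, μ (y i) = 1 := by
    rw [← Fintype.prod_sum (fun (_ : u) (w : ZMod p) => μ w)]
    simp [hμ1]
  calc ∑ y : u → ZMod p, ∑ x ∈ S.filter (fun x => res x = y), ∏ i, μ (x i)
      ≤ ∑ y : u → ZMod p, ρ ^ s.card * ∏ i : u, μ (y i) := by
        apply Finset.sum_le_sum
        intro y _
        have hB0 : 0 ≤ ρ ^ s.card * ∏ i : u, μ (y i) :=
          mul_nonneg (pow_nonneg hρ0 _) (Finset.prod_nonneg fun i _ => hμ0 _)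
        have hcard : (S.filter (fun x => res x = y)).card ≤ 1 := by
          rw [Finset.card_le_one]
          intro a ha c hc
          rw [Finset.mem_filter, hS, Finset.mem_filter] at ha hc
          refine hinj a c ?_ (by rw [ha.1.2, hc.1.2])
          intro j hj
          have hju : j ∈ u := by rw [hu, Finset.mem_compl]; exact hj
          have := congrFun (ha.2.trans hc.2.symm) ⟨j, hju⟩
          exact this
        have hterm : ∀ x ∈ S.filter (fun x => res x = y),
            ∏ i, μ (x i) ≤ ρ ^ s.card * ∏ i : u, μ (y i) := by
          intro x hx
          rw [Finset.mem_filter] at hx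
          have h1 : (∏ i ∈ s, μ (x i)) * ∏ i ∈ sᶜ, μ (x i) = ∏ i, μ (x i) :=
            Finset.prod_mul_prod_compl s _
          have h2 : ∏ i ∈ s, μ (x i) ≤ ρ ^ s.card := by
            calc ∏ i ∈ s, μ (x i) ≤ ∏ _i ∈ s, ρ :=
                  Finset.prod_le_prod (fun i _ => hμ0 _) (fun i _ => hμρ _)
              _ = ρ ^ s.card := Finset.prod_const ρ
          have h3 : ∏ i ∈ sᶜ, μ (x i) = ∏ i : u, μ (y i) := by
            rw [← Finset.prod_coe_sort (sᶜ) (fun i => μ (x i))]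
            refine Finset.prod_congr rfl fun i _ => ?_
            rw [← hx.2]
          rw [← h1, h3]
          exact mul_le_mul_of_nonneg_right h2 (Finset.prod_nonneg fun i _ => hμ0 _)
        calc ∑ x ∈ S.filter (fun x => res x = y), ∏ i, μ (x i)
            ≤ (S.filter (fun x => res x = y)).card • (ρ ^ s.card * ∏ i : u, μ (y i)) :=
              Finset.sum_le_card_nsmul _ _ _ hterm
          _ ≤ ρ ^ s.card * ∏ i : u, μ (y i) := by
              rw [nsmul_eq_mul]
              calc ((S.filter (fun x => res x = y)).card : ℝ) *
                    (ρ ^ s.card * ∏ i : u, μ (y i))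
                  ≤ 1 * (ρ ^ s.card * ∏ i : u, μ (y i)) := by
                    apply mul_le_mul_of_nonneg_right _ hB0
                    exact_mod_cast hcard
                _ = _ := one_mul _
    _ = ρ ^ s.card := by rw [← Finset.mul_sum, houter, mul_one]
end
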